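/- For all real t with 0 < t < π/2, (π³ - 3π²t + 3πt²)·ln(-2·ln(cos t)/t²) ≥ 2t³·ln((π - t)/t). -/

import Mathlib

open Real

private lemma mono_aux {f f' : ℝ → ℝ} {a b : ℝ} (hab : a ≤ b)
    (hd : ∀ y ∈ Set.Icc a b, HasDerivAt f (f' y) y)
    (h0 : ∀ y ∈ Set.Ioo a b, 0 ≤ f' y) : f a ≤ f b := by
  have hm : MonotoneOn f (Set.Icc a b) := by
    apply monotoneOn_of_deriv_nonneg (convex_Icc a b)
    · exact fun y hy => (hd y hy).continuousAt.continuousWithinAt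
    · intro y hy
      rw [interior_Icc] at hy
      exact (hd y (Set.mem_Icc_of_Ioo hy)).differentiableAt.differentiableWithinAt
    · intro y hy
      rw [interior_Icc] at hy
      rw [(hd y (Set.mem_Icc_of_Ioo hy)).deriv]
      exact h0 y hy
  exact hm (Set.left_mem_Icc.2 hab) (Set.right_mem_Icc.2 hab) hab

private lemma tan_lb {x : ℝ} (hx0 : 0 ≤ x) (hx : x < π/2) :
    x + x^3/3 ≤ Real.tan x := by
  have hd : ∀ y ∈ Set.Icc 0 x, HasDerivAt (fun y => Real.tan y - (y + y^3/3))
      (1/Real.cos y^2 - (1 + (3:ℕ)*y^(3-1)/3)) y := by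
    intro y hy
    have hyc : 0 < Real.cos y := by
      apply Real.cos_pos_of_mem_Ioo
      constructor
      · have := Real.pi_pos; linarith [hy.1]
      · exact lt_of_le_of_lt hy.2 hx
    exact (Real.hasDerivAt_tan (ne_of_gt hyc)).sub
      ((hasDerivAt_id y).add ((hasDerivAt_pow 3 y).div_const 3))
  have h0 : ∀ y ∈ Set.Ioo 0 x, 0 ≤ 1/Real.cos y^2 - (1 + (3:ℕ)*y^(3-1)/3) := by
    intro y hy
    have hy2 : y < π/2 := lt_trans hy.2 hx
    have htan : y ≤ Real.tan y := (Real.lt_tan hy.1 hy2).le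
    have hyc : 0 < Real.cos y := by
      apply Real.cos_pos_of_mem_Ioo
      constructor
      · have := Real.pi_pos; linarith [hy.1]
      · exact hy2
    have hid : Real.tan y ^ 2 + 1 = 1 / Real.cos y ^ 2 := by
      rw [Real.tan_eq_sin_div_cos, div_pow]
      field_simp
      exact Real.sin_sq_add_cos_sq y
    have hsq : y^2 ≤ Real.tan y ^ 2 := by nlinarith [hy.1.le]
    push_cast
    nlinarith [hid, hsq]
  have := mono_aux hx0 hd h0
  simp only [Real.tan_zero] at this
  norm_num at this
  linarith

private lemma neglog_cos_lb {t : ℝ} (ht0 : 0 ≤ t) (ht : t < π/2) :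
    t^2/2 + t^4/12 ≤ -Real.log (Real.cos t) := by
  have hd : ∀ y ∈ Set.Icc 0 t, HasDerivAt (fun y => -Real.log (Real.cos y) - (y^2/2 + y^4/12))
      (Real.tan y - (y + y^3/3)) y := by
    intro y hy
    have hyc : 0 < Real.cos y := by
      apply Real.cos_pos_of_mem_Ioo
      constructor
      · have := Real.pi_pos; linarith [hy.1]
      · exact lt_of_le_of_lt hy.2 ht
    have h1 : HasDerivAt (fun y => Real.log (Real.cos y)) (-Real.sin y / Real.cos y) y :=
      (Real.hasDerivAt_cos y).log (ne_of_gt hyc)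
    have h2 := (h1.neg).sub (((hasDerivAt_pow 2 y).div_const 2).add ((hasDerivAt_pow 4 y).div_const 12))
    refine h2.congr_deriv ?_
    rw [Real.tan_eq_sin_div_cos]
    push_cast
    ring
  have h0 : ∀ y ∈ Set.Ioo 0 t, 0 ≤ Real.tan y - (y + y^3/3) := fun y hy =>
    sub_nonneg.2 (tan_lb hy.1.le (lt_trans hy.2 ht))
  have := mono_aux ht0 hd h0
  simp only [Real.cos_zero, Real.log_one] at this
  norm_num at this
  linarith

private lemma log_pade_lb {x : ℝ} (hx : 0 ≤ x) : 2*x/(2+x) ≤ Real.log (1+x) := by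
  have hd : ∀ y ∈ Set.Icc 0 x, HasDerivAt (fun y => Real.log (1+y) - 2*y/(2+y))
      (1/(1+y) - (2*1*(2+y) - 2*y*1)/(2+y)^2) y := by
    intro y hy
    have hy1 : (0:ℝ) < 1 + y := by linarith [hy.1]
    have hy2 : (0:ℝ) < 2 + y := by linarith [hy.1]
    have h1 : HasDerivAt (fun y : ℝ => Real.log (1+y)) (1/(1+y)) y := by
      have := ((hasDerivAt_id y).const_add 1).log (ne_of_gt hy1)
      simpa using this
    exact h1.sub (((hasDerivAt_id y).const_mul 2).div ((hasDerivAt_id y).const_add 2) (ne_of_gt hy2))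
  have h0 : ∀ y ∈ Set.Ioo 0 x, 0 ≤ 1/(1+y) - (2*1*(2+y) - 2*y*1)/(2+y)^2 := by
    intro y hy
    have hy1 : (0:ℝ) < 1 + y := by linarith [hy.1]
    have hy2 : (0:ℝ) < 2 + y := by linarith [hy.1]
    have he : 1/(1+y) - (2*1*(2+y) - 2*y*1)/(2+y)^2 = y^2/((1+y)*(2+y)^2) := by
      field_simp
      ring
    rw [he]
    positivity
  have := mono_aux hx hd h0
  norm_num at this
  linarith

private lemma log_pade_ub {u : ℝ} (hu : 1 ≤ u) :
    Real.log u ≤ 2*(u-1)/(u+1) + (u-1)^3/(6*(u*(u+1))) := by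
  have hd : ∀ y ∈ Set.Icc 1 u, HasDerivAt
      (fun y => 2*(y-1)/(y+1) + (y-1)^3/(6*(y*(y+1))) - Real.log y)
      ((2*1*(y+1) - 2*(y-1)*1)/(y+1)^2
        + ((3:ℕ)*(y-1)^(3-1)*1*(6*(y*(y+1))) - (y-1)^3*(6*(1*(y+1)+y*1)))/(6*(y*(y+1)))^2
        - y⁻¹) y := by
    intro y hy
    have hy0 : (0:ℝ) < y := lt_of_lt_of_le one_pos hy.1
    have hy1 : (0:ℝ) < y + 1 := by linarith
    have hden : (6:ℝ)*(y*(y+1)) ≠ 0 := by positivity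
    exact ((((hasDerivAt_id y).sub_const 1).const_mul 2).div ((hasDerivAt_id y).add_const 1)
        (ne_of_gt hy1)).add
      ((((hasDerivAt_id y).sub_const 1).pow 3).div
        (((hasDerivAt_id y).mul ((hasDerivAt_id y).add_const 1)).const_mul 6) hden)
      |>.sub (Real.hasDerivAt_log (ne_of_gt hy0))
  have h0 : ∀ y ∈ Set.Ioo 1 u, 0 ≤ (2*1*(y+1) - 2*(y-1)*1)/(y+1)^2
        + ((3:ℕ)*(y-1)^(3-1)*1*(6*(y*(y+1))) - (y-1)^3*(6*(1*(y+1)+y*1)))/(6*(y*(y+1)))^2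
        - y⁻¹ := by
    intro y hy
    have hy0 : (0:ℝ) < y := lt_trans one_pos hy.1
    have hy1 : (0:ℝ) < y + 1 := by linarith
    have he : (2*1*(y+1) - 2*(y-1)*1)/(y+1)^2
        + ((3:ℕ)*(y-1)^(3-1)*1*(6*(y*(y+1))) - (y-1)^3*(6*(1*(y+1)+y*1)))/(6*(y*(y+1)))^2
        - y⁻¹ = (y-1)^4/(6*(y^2*(y+1)^2)) := by
      push_cast
      field_simp
      ring
    rw [he]
    positivity
  have := mono_aux hu hd h0
  norm_num at this
  linarith

set_option maxHeartbeats 1000000 in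
theorem stmt_3 (t : ℝ) (h1 : 0 < t) (h2 : t < π/2) :
    (π^3 - 3*π^2*t + 3*π*t^2) * Real.log (-2 * Real.log (Real.cos t) / t^2)
      ≥ 2 * t^3 * Real.log ((π - t) / t) := by
  have hp1 : (3.141592 : ℝ) < π := Real.pi_gt_d6
  have hp2 : π < 3.141593 := Real.pi_lt_d6
  have hπ2t : 0 < π - 2*t := by linarith
  have hπt : 0 < π - t := by linarith
  have ht0 : t ≠ 0 := ne_of_gt h1
  have hπ0 : π ≠ 0 := Real.pi_ne_zero
  have hπt0 : π - t ≠ 0 := ne_of_gt hπt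
  -- polynomial inequality
  have hpoly : (12*t*(π-2*t)*(π-t) + (π-2*t)^3)*(12+t^2) ≤ 6*π*(π-t)*((π-t)^3+t^3) := by
    have h2l : (9.869599:ℝ) < π^2 := by nlinarith
    have h2u : π^2 < 9.869607 := by nlinarith
    have h3l : (31.00625:ℝ) < π^3 := by nlinarith
    have h3u : π^3 < 31.00629 := by nlinarith
    have h4l : (97.40898:ℝ) < π^4 := by nlinarith
    have h4u : π^4 < 97.40916 := by nlinarith
    have h5l : (306.018:ℝ) < π^5 := by nlinarith
    have ht0' : 0 ≤ t := h1.le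
    have ht2 : t ≤ 1.5708 := by nlinarith
    have hq : 0 ≤ 1464 - 3049*t + 1989*t^2 - 429*t^3 + 75*t^4 - 16*t^5 := by
      nlinarith [sq_nonneg (t - 1.07), mul_nonneg ht0' (sq_nonneg (t-1.07)),
        mul_nonneg (mul_nonneg ht0' ht0') (sq_nonneg (t-1.07)),
        mul_nonneg (sub_nonneg.2 ht2) (sq_nonneg (t-1.07)),
        mul_nonneg (mul_nonneg ht0' (sub_nonneg.2 ht2)) (sq_nonneg (t-1.07)),
        sq_nonneg (t*(t-1.07)), mul_nonneg ht0' ht0']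
    have hc0 : (1464:ℝ) ≤ 6*π^5 - 12*π^3 := by linarith
    have hc1 : (0:ℝ) ≤ 3049 - 24*π^4 - 72*π^2 := by linarith
    have hc2 : (0:ℝ) ≤ 35*π^3 + 288*π - 1989 := by linarith
    have hc3 : (0:ℝ) ≤ 429 - 24*π^2 - 192 := by linarith
    have hc4 : (0:ℝ) ≤ 24*π - 75 := by linarith
    nlinarith [hq, mul_nonneg hc1 ht0', mul_nonneg hc2 (sq_nonneg t),
      mul_nonneg hc3 (mul_nonneg (mul_nonneg ht0' ht0') ht0'),
      mul_nonneg hc4 (sq_nonneg (t^2))]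
  -- coefficient positivity
  have hA : (0:ℝ) < π^3 - 3*π^2*t + 3*π*t^2 := by
    nlinarith [pow_pos hπt 3, pow_pos h1 3]
  -- lower bound for log of ratio
  have hD := neglog_cos_lb h1.le h2
  have hR : 1 + t^2/6 ≤ -2 * Real.log (Real.cos t) / t^2 := by
    rw [le_div_iff₀ (by positivity)]
    nlinarith [hD]
  have hlog1 : Real.log (1 + t^2/6) ≤ Real.log (-2 * Real.log (Real.cos t) / t^2) :=
    Real.log_le_log (by positivity) hR
  have hlog2 := log_pade_lb (show (0:ℝ) ≤ t^2/6 by positivity)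
  have hlog3 : 2*t^2/(12+t^2) ≤ Real.log (-2 * Real.log (Real.cos t) / t^2) := by
    have he : 2*(t^2/6)/(2+t^2/6) = 2*t^2/(12+t^2) := by
      rw [div_eq_div_iff (by positivity) (by positivity)]
      ring
    rw [he] at hlog2
    linarith
  -- upper bound for log((π-t)/t)
  have hu : 1 ≤ (π - t)/t := by
    rw [le_div_iff₀ h1]; linarith
  have hub := log_pade_ub hu
  have heq : 2*((π-t)/t-1)/((π-t)/t+1) + ((π-t)/t-1)^3/(6*(((π-t)/t)*((π-t)/t+1)))
      = 2*(π-2*t)/π + (π-2*t)^3/(6*(π*(t*(π-t)))) := by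
    have hs : (π-t)/t+1 = π/t := by field_simp; ring
    rw [hs]
    field_simp
    ring
  rw [heq] at hub
  -- middle comparison
  have hden1 : (0:ℝ) < 6*(π*(t*(π-t))) :=
    mul_pos (by norm_num) (mul_pos Real.pi_pos (mul_pos h1 hπt))
  have hmid : 2*t^3*(2*(π-2*t)/π + (π-2*t)^3/(6*(π*(t*(π-t)))))
      ≤ (π^3 - 3*π^2*t + 3*π*t^2)*(2*t^2/(12+t^2)) := by
    have e1 : 2*t^3*(2*(π-2*t)/π + (π-2*t)^3/(6*(π*(t*(π-t)))))
        = (2*t^3*(12*t*(π-2*t)*(π-t) + (π-2*t)^3))/(6*(π*(t*(π-t)))) := by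
      field_simp
      ring
    have e2 : (π^3 - 3*π^2*t + 3*π*t^2)*(2*t^2/(12+t^2))
        = ((π^3 - 3*π^2*t + 3*π*t^2)*(2*t^2))/(12+t^2) := by ring
    rw [e1, e2, div_le_div_iff₀ hden1 (by positivity)]
    nlinarith [mul_le_mul_of_nonneg_left hpoly (show (0:ℝ) ≤ 2*t^3 by positivity)]
  have final1 : (π^3 - 3*π^2*t + 3*π*t^2)*(2*t^2/(12+t^2))
      ≤ (π^3 - 3*π^2*t + 3*π*t^2) * Real.log (-2 * Real.log (Real.cos t) / t^2) :=
    mul_le_mul_of_nonneg_left hlog3 hA.le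
  have final2 : 2*t^3*Real.log ((π-t)/t)
      ≤ 2*t^3*(2*(π-2*t)/π + (π-2*t)^3/(6*(π*(t*(π-t))))) :=
    mul_le_mul_of_nonneg_left hub (by positivity)
  linarith
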